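/- Let X be a nonempty finite type, T ≥ 1, r : X → ℝ a reward, μ an initial distribution on X, and d ≥ 1. Suppose for each t = 1, …, T and each x, y ∈ X the map θ ↦ p^θ_{t-1}(y|x) from ℝ^d to ℝ is differentiable, positive, and satisfies Σ_y p^θ_{t-1}(y|x) = 1 for every θ. Define J(θ) := Σ_{(x_T,…,x_0)} μ(x_T) (Π_{t=T}^{1} p^θ_{t-1}(x_{t-1}|x_t)) · r(x_0). Then J is differentiable and its gradient satisfies the policy gradient identity: ∇_θ J(θ) = Σ_{(x_T,…,x_0)} μ(x_T) (Π_{t=T}^{1} p^θ_{t-1}(x_{t-1}|x_t)) · r(x_0) · Σ_{t=1}^{T} ∇_θ log p^θ_{t-1}(x_{t-1}|x_t), i.e., the gradient of the expected reward equals the expectation, under the trajectory distribution induced by p^θ, of the reward times the sum of per-step score functions. -/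

import Mathlib

open Real

/-- KL divergence between two mass functions on a finite type, with the
convention `0 * log 0 = 0` (automatic, since `0 * _ = 0` in `ℝ`). -/
noncomputable def KLd {Y : Type*} [Fintype Y] (p q : Y → ℝ) : ℝ :=
  ∑ y, p y * Real.log (p y / q y)

/-- Product of transition probabilities along a trajectory `(x_{t-1}, …, x_0)`
(encoded as `y : Fin t → X`, with `y i = x_i`) starting from `x_t = x`:
`∏_{s=t}^{1} p_{s-1}(x_{s-1} | x_s)`. -/
noncomputable def chainProd {X : Type*} (p : ℕ → X → X → ℝ) (t : ℕ) (x : X)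
    (y : Fin t → X) : ℝ :=
  ∏ s : Fin t, p s (if h : (s : ℕ) + 1 < t then y ⟨(s : ℕ) + 1, h⟩ else x) (y s)

/-- The soft value functions: `v_0 = r` and, for `t ≥ 1`,
`v_t(x) = α * log ∑_{x_{t-1},…,x_0} (∏_{s=t}^{1} p_{s-1}(x_{s-1}|x_s)) exp(r(x_0)/α)`. -/
noncomputable def softValue {X : Type*} [Fintype X] (p : ℕ → X → X → ℝ) (r : X → ℝ)
    (α : ℝ) : ℕ → X → ℝ
  | 0, x => r x
  | (t + 1), x =>
      α * Real.log (∑ y : Fin (t + 1) → X,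
        chainProd p (t + 1) x y * Real.exp (r (y 0) / α))

/-- The soft-optimal policy
`p*_{t-1}(y|x) = p^pre_{t-1}(y|x) * exp(v_{t-1}(y)/α) / exp(v_t(x)/α)`.
The index `t : ℕ` here stands for `t-1`, so it uses `v_t` and `v_{t+1}`. -/
noncomputable def softOpt {X : Type*} [Fintype X] (p : ℕ → X → X → ℝ) (r : X → ℝ)
    (α : ℝ) (t : ℕ) (x y : X) : ℝ :=
  p t x y * Real.exp (softValue p r α t y / α) / Real.exp (softValue p r α (t + 1) x / α)

/-- The joint trajectory distribution
`P^q_μ(x_T,…,x_0) = μ(x_T) * ∏_{t=T}^{1} q_{t-1}(x_{t-1}|x_t)`, a trajectory being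
encoded as `x : Fin (T+1) → X` with `x i = x_i` (so `x (Fin.last T) = x_T`). -/
noncomputable def trajProb {X : Type*} (μ : X → ℝ) (q : ℕ → X → X → ℝ) (T : ℕ)
    (x : Fin (T + 1) → X) : ℝ :=
  μ (x (Fin.last T)) * ∏ t : Fin T, q t (x t.succ) (x t.castSucc)

/-- Expectation of `f` under the joint trajectory distribution `P^q_μ`. -/
noncomputable def trajExp {X : Type*} [Fintype X] (μ : X → ℝ) (q : ℕ → X → X → ℝ)
    (T : ℕ) (f : (Fin (T + 1) → X) → ℝ) : ℝ :=
  ∑ x : Fin (T + 1) → X, trajProb μ q T x * f x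

/-- `q` is a policy sequence for horizon `T`: for each `t < T` (our index `t`
stands for `t-1` with `1 ≤ t ≤ T`), `q t x ·` is a probability mass function. -/
def IsPolicy {X : Type*} [Fintype X] (T : ℕ) (q : ℕ → X → X → ℝ) : Prop :=
  ∀ t < T, ∀ x : X, (∀ y : X, 0 ≤ q t x y) ∧ (∑ y, q t x y) = 1

/-- A policy sequence is positive if all its transition probabilities are positive. -/
def IsPositive {X : Type*} (T : ℕ) (q : ℕ → X → X → ℝ) : Prop :=
  ∀ t < T, ∀ x y : X, 0 < q t x y

/-- policy gradient identity. If each transition probability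
`θ ↦ p^θ_{t-1}(y|x)` is differentiable, positive and normalized, then the expected
reward `J(θ) = ∑_{traj} μ(x_T) (∏_t p^θ_{t-1}(x_{t-1}|x_t)) r(x_0)` is
differentiable and
`∇J(θ) = ∑_{traj} μ(x_T) (∏_t p^θ_{t-1}(x_{t-1}|x_t)) r(x_0) ∑_t ∇ log p^θ_{t-1}(x_{t-1}|x_t)`. -/
theorem statement13 {X : Type*} [Fintype X] [Nonempty X]
    (T : ℕ) (hT : 1 ≤ T) (d : ℕ) (hd : 1 ≤ d)
    (r : X → ℝ) (μ : X → ℝ) (hμ0 : ∀ x, 0 ≤ μ x) (hμ1 : (∑ x, μ x) = 1)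
    (p : (Fin d → ℝ) → ℕ → X → X → ℝ)
    (hdiff : ∀ t < T, ∀ x y : X, Differentiable ℝ (fun θ => p θ t x y))
    (hpos : ∀ θ : Fin d → ℝ, ∀ t < T, ∀ x y : X, 0 < p θ t x y)
    (hsum : ∀ θ : Fin d → ℝ, ∀ t < T, ∀ x : X, (∑ y, p θ t x y) = 1) :
    Differentiable ℝ (fun θ : Fin d → ℝ =>
      ∑ x : Fin (T + 1) → X,
        μ (x (Fin.last T)) * (∏ t : Fin T, p θ t (x t.succ) (x t.castSucc)) * r (x 0))
    ∧ ∀ θ : Fin d → ℝ,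
        fderiv ℝ (fun θ' : Fin d → ℝ =>
          ∑ x : Fin (T + 1) → X,
            μ (x (Fin.last T)) * (∏ t : Fin T, p θ' t (x t.succ) (x t.castSucc))
              * r (x 0)) θ
        = ∑ x : Fin (T + 1) → X,
            (μ (x (Fin.last T)) * (∏ t : Fin T, p θ t (x t.succ) (x t.castSucc))
              * r (x 0))
            • ∑ t : Fin T,
                fderiv ℝ
                  (fun θ' : Fin d → ℝ =>
                    Real.log (p θ' t (x t.succ) (x t.castSucc))) θ := by

  classical
  -- per-step derivative setup
  have hstep : ∀ θ : Fin d → ℝ, ∀ x : Fin (T + 1) → X,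
      HasFDerivAt (fun θ' => μ (x (Fin.last T)) * (∏ t : Fin T, p θ' t (x t.succ) (x t.castSucc)) * r (x 0))
        ((μ (x (Fin.last T)) * r (x 0)) • ∑ t : Fin T,
          (∏ s ∈ Finset.univ.erase t, p θ s (x s.succ) (x s.castSucc)) •
            fderiv ℝ (fun θ' => p θ' t (x t.succ) (x t.castSucc)) θ) θ := by
    intro θ x
    have hprod : HasFDerivAt (fun θ' => ∏ t : Fin T, p θ' t (x t.succ) (x t.castSucc))
        (∑ t : Fin T, (∏ s ∈ Finset.univ.erase t, p θ s (x s.succ) (x s.castSucc)) •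
            fderiv ℝ (fun θ' => p θ' t (x t.succ) (x t.castSucc)) θ) θ := by
      apply HasFDerivAt.finset_prod
      intro t _
      exact ((hdiff t t.isLt (x t.succ) (x t.castSucc)) θ).hasFDerivAt
    have := (hprod.const_mul (μ (x (Fin.last T)))).mul_const (r (x 0))
    refine this.congr_fderiv ?_
    ext θ'
    simp only [ContinuousLinearMap.smul_apply, smul_eq_mul]
    ring
  have hJ : ∀ θ : Fin d → ℝ,
      HasFDerivAt (fun θ' : Fin d → ℝ =>
        ∑ x : Fin (T + 1) → X,
          μ (x (Fin.last T)) * (∏ t : Fin T, p θ' t (x t.succ) (x t.castSucc)) * r (x 0))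
        (∑ x : Fin (T + 1) → X,
          (μ (x (Fin.last T)) * r (x 0)) • ∑ t : Fin T,
            (∏ s ∈ Finset.univ.erase t, p θ s (x s.succ) (x s.castSucc)) •
              fderiv ℝ (fun θ' => p θ' t (x t.succ) (x t.castSucc)) θ) θ := by
    intro θ
    exact HasFDerivAt.fun_sum (fun x _ => hstep θ x)
  constructor
  · intro θ; exact (hJ θ).differentiableAt
  · intro θ
    rw [(hJ θ).fderiv]
    apply Finset.sum_congr rfl
    intro x _
    -- compute the log derivatives
    have hlog : ∀ t : Fin T,
        fderiv ℝ (fun θ' : Fin d → ℝ => Real.log (p θ' t (x t.succ) (x t.castSucc))) θ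
          = (p θ t (x t.succ) (x t.castSucc))⁻¹ •
              fderiv ℝ (fun θ' => p θ' t (x t.succ) (x t.castSucc)) θ := by
      intro t
      exact (((hdiff t t.isLt (x t.succ) (x t.castSucc)) θ).hasFDerivAt.log
        (ne_of_gt (hpos θ t t.isLt _ _))).fderiv
    simp only [hlog, Finset.smul_sum, smul_smul]
    apply Finset.sum_congr rfl
    intro t _
    congr 1
    have hp := hpos θ t t.isLt (x t.succ) (x t.castSucc)
    have herase : (∏ s : Fin T, p θ s (x s.succ) (x s.castSucc))
        = p θ t (x t.succ) (x t.castSucc) * ∏ s ∈ Finset.univ.erase t, p θ s (x s.succ) (x s.castSucc) :=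
      (Finset.mul_prod_erase Finset.univ _ (Finset.mem_univ t)).symm
    rw [herase]
    field_simp
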